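/- For every complex number t with |t| ≤ 1 and t ≠ 1, one has 2·Σ_{k=1}^∞ C(2k,k) C(4k,2k) (t/64)^k (2H_{4k} − H_{2k}) = −(Σ_{k=0}^∞ C(2k,k) C(4k,2k) (t/64)^k) · Log(1−t). -/

import Mathlib

/-- The `n`-th harmonic number `H_n = ∑_{j=1}^n 1/j`. -/
noncomputable def H (n : ℕ) : ℝ := ∑ j ∈ Finset.range n, (1 : ℝ) / (j + 1)


noncomputable def A (k : ℕ) : ℝ :=
  (Nat.centralBinom k : ℝ) * (Nat.centralBinom (2 * k) : ℝ) / 64 ^ k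

lemma A_pos (k : ℕ) : 0 < A k := by
  have h1 := Nat.centralBinom_pos k
  have h2 := Nat.centralBinom_pos (2 * k)
  have h1' : (0:ℝ) < Nat.centralBinom k := by exact_mod_cast h1
  have h2' : (0:ℝ) < Nat.centralBinom (2 * k) := by exact_mod_cast h2
  unfold A
  positivity

lemma cbR (n : ℕ) : ((n : ℝ) + 1) * Nat.centralBinom (n + 1)
    = 2 * (2 * n + 1) * Nat.centralBinom n := by
  exact_mod_cast congrArg (Nat.cast : ℕ → ℝ) (Nat.succ_mul_centralBinom_succ n)

lemma A_rec (k : ℕ) : 16 * ((k : ℝ) + 1) ^ 2 * A (k + 1) = (4 * k + 1) * (4 * k + 3) * A k := by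
  have e1 := cbR k
  have e2 := cbR (2 * k)
  have e3 := cbR (2 * k + 1)
  push_cast at e1 e2 e3
  have key : 16 * ((k : ℝ) + 1) ^ 2 *
      ((Nat.centralBinom (k+1) : ℝ) * (Nat.centralBinom (2*k+1+1) : ℝ))
      = 64 * ((4 * k + 1) * (4 * k + 3)) *
        ((Nat.centralBinom k : ℝ) * (Nat.centralBinom (2*k) : ℝ)) := by
    linear_combination (16 * ((k:ℝ)+1) * (Nat.centralBinom (2*k+1+1) : ℝ)) * e1
      + (16 * (2*(k:ℝ)+1) * (Nat.centralBinom k : ℝ)) * e3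
      + (32 * (4*(k:ℝ)+3) * (Nat.centralBinom k : ℝ)) * e2
  unfold A
  have h64 : (64:ℝ) ^ k ≠ 0 := by positivity
  rw [show 2 * (k+1) = 2*k+1+1 by ring, pow_succ]
  field_simp
  linear_combination (64:ℝ)^k * key

lemma A_succ (k : ℕ) :
    A (k+1) = (4*(k:ℝ)+1)*(4*(k:ℝ)+3)*A k/(16*((k:ℝ)+1)^2) := by
  have h := A_rec k
  have hk : ((k:ℝ)+1) ≠ 0 := by positivity
  field_simp
  linear_combination h

lemma H_succ (m : ℕ) : H (m+1) = H m + 1/((m:ℝ)+1) := by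
  unfold H
  rw [Finset.sum_range_succ]

lemma combo_succ (n : ℕ) :
    2 * H (4*(n+1)) - H (2*(n+1))
      = 2 * H (4*n) - H (2*n) + 2/(4*(n:ℝ)+1) + 2/(4*(n:ℝ)+3) := by
  have h4 : 4*(n+1) = 4*n+1+1+1+1 := by ring
  have h2 : 2*(n+1) = 2*n+1+1 := by ring
  rw [h4, h2, H_succ, H_succ, H_succ, H_succ, H_succ, H_succ]
  push_cast
  have p1 : (4*(n:ℝ)+1) ≠ 0 := by positivity
  have p2 : (4*(n:ℝ)+1+1) ≠ 0 := by positivity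
  have p3 : (4*(n:ℝ)+1+1+1) ≠ 0 := by positivity
  have p4 : (4*(n:ℝ)+1+1+1+1) ≠ 0 := by positivity
  have q1 : (2*(n:ℝ)+1) ≠ 0 := by positivity
  have q2 : (2*(n:ℝ)+1+1) ≠ 0 := by positivity
  field_simp
  ring

noncomputable def W (n i : ℕ) : ℝ :=
  -(((n:ℝ)+1-(i:ℝ))^2 * A (n+1-i) / (((i:ℝ)+1)*((n:ℝ)+2)^2))

lemma step (n : ℕ) (i : ℕ) (hi : i ∈ Finset.range (n+1)) :
    A (n-i)/((i:ℝ)+2)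
      = (4*(n:ℝ)+5)*(4*(n:ℝ)+7)/(16*((n:ℝ)+2)^2) * (A (n-i)/((i:ℝ)+1))
        + (W n i - W n (i+1)) := by
  have hi' : i ≤ n := by simpa [Nat.lt_succ_iff] using hi
  obtain ⟨k, rfl⟩ : ∃ k, n = k + i := ⟨n - i, by omega⟩
  unfold W
  have e1 : k + i - i = k := by omega
  have e2 : k + i + 1 - i = k + 1 := by omega
  have e3 : k + i + 1 - (i+1) = k := by omega
  rw [e1, e2, e3, A_succ]
  push_cast
  have h1 : ((i:ℝ)+1) ≠ 0 := by positivity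
  have h2 : ((i:ℝ)+2) ≠ 0 := by positivity
  have h3 : ((k:ℝ)+(i:ℝ)+2) ≠ 0 := by positivity
  have h4 : ((k:ℝ)+1) ≠ 0 := by positivity
  field_simp
  ring

lemma W_zero (n : ℕ) : W n 0 = -(((n:ℝ)+1)^2 * A (n+1) / ((n:ℝ)+2)^2) := by
  unfold W
  norm_num

lemma W_last (n : ℕ) : W n (n+1) = 0 := by
  unfold W
  have : ((n:ℝ)+1-((n+1:ℕ):ℝ)) = 0 := by push_cast; ring
  rw [this]
  ring

lemma coeff (n : ℕ) :
    2 * A (n+1) * (2 * H (4*(n+1)) - H (2*(n+1)))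
      = ∑ i ∈ Finset.range (n+1), A (n-i) / ((i:ℝ)+1) := by
  induction n with
  | zero =>
      have hA1 : A 1 = 3/16 := by
        have c1 : Nat.centralBinom 1 = 2 := by decide
        have c2 : Nat.centralBinom 2 = 6 := by decide
        unfold A
        rw [show 2*1 = 2 by norm_num, c1, c2]
        norm_num
      have h4 : H 4 = 25/12 := by
        unfold H
        rw [show (4:ℕ) = 3+1 by norm_num, Finset.sum_range_succ,
          Finset.sum_range_succ, Finset.sum_range_succ, Finset.sum_range_succ]
        norm_num
      have h2 : H 2 = 3/2 := by
        unfold H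
        simp only [Finset.sum_range_succ, Finset.sum_range_zero]
        norm_num
      have hA0 : A 0 = 1 := by unfold A; norm_num
      norm_num [hA1, h4, h2, hA0]
  | succ n ih =>
      have e : n + 1 + 1 = n + 2 := by omega
      rw [e]
      have hsplit : ∑ i ∈ Finset.range (n+2), A (n+1-i) / ((i:ℝ)+1)
          = (∑ i ∈ Finset.range (n+1), A (n-i) / ((i:ℝ)+2)) + A (n+1) := by
        rw [Finset.sum_range_succ']
        norm_num
        exact Finset.sum_congr rfl fun i _ => by
          rw [Nat.succ_sub_succ]; push_cast; ring
      have key : ∑ i ∈ Finset.range (n+1), A (n-i) / ((i:ℝ)+2)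
          = (4*(n:ℝ)+5)*(4*(n:ℝ)+7)/(16*((n:ℝ)+2)^2)
              * ∑ i ∈ Finset.range (n+1), A (n-i) / ((i:ℝ)+1)
            - ((n:ℝ)+1)^2 * A (n+1) / ((n:ℝ)+2)^2 := by
        rw [Finset.sum_congr rfl (step n), Finset.sum_add_distrib, ← Finset.mul_sum,
          Finset.sum_range_sub' (W n) (n+1), W_zero, W_last]
        ring
      have hb : A (n+2) = (4*(n:ℝ)+5)*(4*(n:ℝ)+7)*A (n+1)/(16*((n:ℝ)+2)^2) := by
        have h := A_succ (n+1)
        push_cast at h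
        rw [show n+1+1 = n+2 by omega] at h
        rw [h]; ring
      have hc : 2*H (4*(n+2)) - H (2*(n+2))
          = (2*H (4*(n+1)) - H (2*(n+1))) + 2/(4*(n:ℝ)+5) + 2/(4*(n:ℝ)+7) := by
        have h := combo_succ (n+1)
        push_cast at h
        rw [show n+1+1 = n+2 by omega] at h
        rw [h]; ring
      rw [hsplit, key, hb, hc, ← ih]
      have p1 : (4*(n:ℝ)+5) ≠ 0 := by positivity
      have p2 : (4*(n:ℝ)+7) ≠ 0 := by positivity
      have p3 : ((n:ℝ)+2) ≠ 0 := by positivity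
      field_simp
      ring

lemma cb1_eq (k : ℕ) : Nat.centralBinom k = (2*k).choose k := rfl

lemma cb2_eq (k : ℕ) : Nat.centralBinom (2*k) = (4*k).choose (2*k) := by
  unfold Nat.centralBinom
  rw [show 2*(2*k) = 4*k by ring]

lemma A_le_one (k : ℕ) : A k ≤ 1 := by
  have b1 : (Nat.centralBinom k : ℝ) ≤ 4^k := by
    exact_mod_cast le_trans (Nat.choose_le_choose k (by omega : 2*k ≤ 2*k+1))
      (Nat.choose_middle_le_pow k)
  have b2 : (Nat.centralBinom (2*k) : ℝ) ≤ 4^(2*k) := by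
    exact_mod_cast le_trans (Nat.choose_le_choose (2*k) (by omega : 2*(2*k) ≤ 2*(2*k)+1))
      (Nat.choose_middle_le_pow (2*k))
  have h1 : (0:ℝ) ≤ (Nat.centralBinom k : ℝ) := by positivity
  have h2 : (0:ℝ) < (64:ℝ)^k := by positivity
  unfold A
  rw [div_le_one h2]
  calc (Nat.centralBinom k : ℝ) * (Nat.centralBinom (2*k) : ℝ)
      ≤ 4^k * 4^(2*k) := by
        apply mul_le_mul b1 b2 (by positivity) (by positivity)
    _ = 64^k := by
        rw [show (64:ℝ) = 4^3 by norm_num, ← pow_mul, ← pow_add]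
        congr 1
        omega

lemma A_one : A 1 = 3/16 := by
  have c1 : Nat.centralBinom 1 = 2 := by decide
  have c2 : Nat.centralBinom 2 = 6 := by decide
  unfold A
  rw [show 2*1 = 2 by norm_num, c1, c2]
  norm_num

lemma A_lb (k : ℕ) : 3/16 ≤ ((k:ℝ)+1) * A (k+1) := by
  induction k with
  | zero => rw [A_one]; norm_num
  | succ k ih =>
      have h := A_succ (k+1)
      push_cast at h
      have hpos := A_pos (k+1)
      have e : ((k:ℝ)+1+1) * A (k+1+1) - ((k:ℝ)+1) * A (k+1)
          = 3 * A (k+1) / (16*((k:ℝ)+1+1)) := by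
        rw [h]
        have : ((k:ℝ)+1+1) ≠ 0 := by positivity
        field_simp
        ring
      have hq : 0 < 3 * A (k+1) / (16*((k:ℝ)+1+1)) := by positivity
      push_cast
      linarith

lemma H_mono {a b : ℕ} (h : a ≤ b) : H a ≤ H b := by
  unfold H
  apply Finset.sum_le_sum_of_subset_of_nonneg (Finset.range_subset_range.2 h)
  intros
  positivity

lemma combo_ge_one (m : ℕ) (hm : 1 ≤ m) : 1 ≤ 2 * H (4*m) - H (2*m) := by
  have h1 : H (2*m) ≤ H (4*m) := H_mono (by omega)
  have h2 : H 1 ≤ H (2*m) := H_mono (by omega)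
  have h3 : H 1 = 1 := by unfold H; norm_num
  linarith

noncomputable def dd (t : ℂ) (k : ℕ) : ℂ :=
  ((Nat.choose (2*k) k : ℂ)) * ((Nat.choose (4*k) (2*k) : ℂ)) * (t/64)^k

noncomputable def ee (t : ℂ) (n : ℕ) : ℂ :=
  ((Nat.choose (2*n) n : ℂ)) * ((Nat.choose (4*n) (2*n) : ℂ)) * (t/64)^n *
    (2 * (H (4*n) : ℂ) - (H (2*n) : ℂ))

lemma dd_eq (t : ℂ) (k : ℕ) : dd t k = ((A k : ℝ) : ℂ) * t^k := by
  unfold dd A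
  rw [cb1_eq, cb2_eq]
  push_cast
  field_simp
  rw [mul_assoc, ← mul_pow, div_mul_cancel₀ t (by norm_num : (64:ℂ) ≠ 0)]

lemma ee_eq (t : ℂ) (n : ℕ) :
    ee t n = ((A n * (2 * H (4*n) - H (2*n)) : ℝ) : ℂ) * t^n := by
  unfold ee A
  rw [cb1_eq, cb2_eq]
  push_cast
  field_simp
  have h64 : (1/64 : ℂ)^n * 64^n = 1 := by rw [← mul_pow]; norm_num
  linear_combination (((2 * n).choose n : ℂ) * ((4 * n).choose (2 * n) : ℂ) * t ^ n *
    ((H (4 * n) : ℂ) * 2 - (H (2 * n) : ℂ))) * h64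

lemma dd_norm (t : ℂ) (k : ℕ) : ‖dd t k‖ = A k * ‖t‖^k := by
  rw [dd_eq, norm_mul, norm_pow, Complex.norm_real]
  rw [Real.norm_of_nonneg (A_pos k).le]

lemma ee_norm (t : ℂ) (n : ℕ) (hn : 1 ≤ n) :
    ‖ee t n‖ = A n * (2 * H (4*n) - H (2*n)) * ‖t‖^n := by
  rw [ee_eq, norm_mul, norm_pow, Complex.norm_real]
  rw [Real.norm_of_nonneg]
  have h1 := combo_ge_one n hn
  have h2 := (A_pos n).le
  positivity

lemma cauchy_coeff (t : ℂ) (n : ℕ) :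
    ∑ i ∈ Finset.range (n+1), (t^i/(i:ℂ)) * dd t (n-i) = 2 * ee t n := by
  cases n with
  | zero =>
      have h0 : H 0 = 0 := by unfold H; simp
      simp [ee, h0]
  | succ m =>
      rw [Finset.sum_range_succ']
      norm_num
      have hper : ∀ i ∈ Finset.range (m+1),
          (t^(i+1)/((i:ℂ)+1)) * dd t (m+1-(i+1))
            = ((A (m-i) / ((i:ℝ)+1) : ℝ) : ℂ) * t^(m+1) := by
        intro i hi
        have hi' : i ≤ m := by simpa [Nat.lt_succ_iff] using hi
        rw [Nat.succ_sub_succ, dd_eq]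
        have ht : t^(i+1) * t^(m-i) = t^(m+1) := by
          rw [← pow_add]
          congr 1
          omega
        push_cast
        rw [← ht]
        ring
      rw [Finset.sum_congr rfl hper, ← Finset.sum_mul, ← Complex.ofReal_sum,
        ← coeff m, ee_eq]
      push_cast
      ring

lemma summable_c {t : ℂ} (ht : ‖t‖ < 1) : Summable (fun m : ℕ => ‖t^m/(m:ℂ)‖) := by
  apply Summable.of_nonneg_of_le (fun _ => norm_nonneg _) _
    (summable_geometric_of_lt_one (norm_nonneg t) ht)
  intro m
  cases m with
  | zero => simp
  | succ m =>
      rw [norm_div, norm_pow]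
      apply div_le_self (by positivity)
      rw [Complex.norm_natCast]
      exact_mod_cast Nat.one_le_iff_ne_zero.2 (Nat.succ_ne_zero m)

lemma summable_d {t : ℂ} (ht : ‖t‖ < 1) : Summable (fun k => ‖dd t k‖) := by
  apply Summable.of_nonneg_of_le (fun _ => norm_nonneg _) _
    (summable_geometric_of_lt_one (norm_nonneg t) ht)
  intro k
  rw [dd_norm]
  exact mul_le_of_le_one_left (by positivity) (A_le_one k)

theorem stmt_2 (t : ℂ) (ht : ‖t‖ ≤ 1) (ht1 : t ≠ 1) :
    2 * ∑' k : ℕ, ((Nat.choose (2 * (k + 1)) (k + 1) : ℂ)) *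
        ((Nat.choose (4 * (k + 1)) (2 * (k + 1)) : ℂ)) * (t / 64) ^ (k + 1) *
        (2 * (H (4 * (k + 1)) : ℂ) - (H (2 * (k + 1)) : ℂ)) =
      -(∑' k : ℕ, ((Nat.choose (2 * k) k : ℂ)) * ((Nat.choose (4 * k) (2 * k) : ℂ)) *
          (t / 64) ^ k) * Complex.log (1 - t) := by
  show 2 * ∑' k : ℕ, ee t (k+1) = -(∑' k : ℕ, dd t k) * Complex.log (1-t)
  have hH0 : H 0 = 0 := by unfold H; simp
  rcases lt_or_eq_of_le ht with hlt | hone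
  · have hT : ‖t‖ < 1 := by exact hlt
    have hc := summable_c hT
    have hd := summable_d hT
    have hE : Summable (fun n => ∑ i ∈ Finset.range (n+1), (t^i/(i:ℂ)) * dd t (n-i)) :=
      (summable_norm_sum_mul_range_of_summable_norm hc hd).of_norm
    have hlog : HasSum (fun m : ℕ => t^m/(m:ℂ)) (-Complex.log (1-t)) :=
      Complex.hasSum_taylorSeries_neg_log hT
    have h0 : ∑ i ∈ Finset.range (0+1), (t^i/(i:ℂ)) * dd t (0-i) = 0 := by
      rw [cauchy_coeff t 0]
      simp [ee, hH0]
    calc 2 * ∑' k : ℕ, ee t (k+1)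
        = ∑' k : ℕ, ∑ i ∈ Finset.range ((k+1)+1), (t^i/(i:ℂ)) * dd t ((k+1)-i) := by
          rw [← tsum_mul_left]
          exact tsum_congr fun k => (cauchy_coeff t (k+1)).symm
      _ = ∑' n : ℕ, ∑ i ∈ Finset.range (n+1), (t^i/(i:ℂ)) * dd t (n-i) := by
          rw [Summable.tsum_eq_zero_add hE, h0, zero_add]
      _ = (∑' m : ℕ, t^m/(m:ℂ)) * (∑' k, dd t k) :=
          (tsum_mul_tsum_eq_tsum_sum_range_of_summable_norm hc hd).symm
      _ = -(∑' k, dd t k) * Complex.log (1-t) := by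
          rw [hlog.tsum_eq]; ring
  · have hnorm : ‖t‖ = 1 := by exact hone
    have hnd : ¬ Summable (fun k => dd t k) := by
      intro hs
      have hn : Summable (fun k => A k) :=
        (summable_norm_iff.mpr hs).congr
          (fun k => by rw [dd_norm, hnorm, one_pow, mul_one])
      have hn1 : Summable (fun k => A (k+1)) := (summable_nat_add_iff 1).2 hn
      have hharm : Summable (fun k : ℕ => 1/((k:ℝ)+1)) := by
        have h1 : Summable (fun k : ℕ => (16/3) * A (k+1)) := hn1.mul_left _
        apply Summable.of_nonneg_of_le (fun k => by positivity) _ h1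
        intro k
        have hk : (0:ℝ) < (k:ℝ)+1 := by positivity
        rw [div_le_iff₀ hk]
        nlinarith [A_lb k]
      exact Real.not_summable_one_div_natCast
        ((summable_nat_add_iff 1).1 (by simpa using hharm))
    have hne : ¬ Summable (fun k => ee t (k+1)) := by
      intro hs
      have hn := summable_norm_iff.mpr hs
      have hharm : Summable (fun k : ℕ => 1/((k:ℝ)+1)) := by
        have h1 : Summable (fun k : ℕ => (16/3) * ‖ee t (k+1)‖) := hn.mul_left _
        apply Summable.of_nonneg_of_le (fun k => by positivity) _ h1
        intro k
        have hek : ‖ee t (k+1)‖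
            = A (k+1) * (2*H (4*(k+1)) - H (2*(k+1))) * ‖t‖^(k+1) :=
          ee_norm t (k+1) (by omega)
        have hcombo := combo_ge_one (k+1) (by omega)
        have hApos := A_pos (k+1)
        have hk : (0:ℝ) < (k:ℝ)+1 := by positivity
        rw [div_le_iff₀ hk, hek, hnorm, one_pow]
        nlinarith [A_lb k]
      exact Real.not_summable_one_div_natCast
        ((summable_nat_add_iff 1).1 (by simpa using hharm))
    rw [tsum_eq_zero_of_not_summable hne, tsum_eq_zero_of_not_summable hnd]
    ring
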